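/- (Per-iteration PartiMax bound) Let i* = argmax_{i ∈ X \ A} Δ_f(i|A), and let i' be the maximizer of Δ_f(·|A) over r samples drawn i.i.d. with Pr(i = i_j) = Δ_f(i_j|A)/(t·m), where r ≥ t·m/2 - 1. Then Δ_f(i*|A) - E[Δ_f(i'|A)] ≤ (r/(r+1))^r · Δ_f(i*|A). -/

import Mathlib

/-- Per-iteration PartiMax bound: let `Δ i` be the number of particles covered by box `i`
but not by the current solution `A`, `i*` the best box outside `A`, and let `i'` be the
best of `r` boxes drawn i.i.d. with `Pr(i) = Δ(i)/(t·m)` (with `t` tilings and `m`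
uncovered particles).  If `r ≥ t·m/2 - 1` then
`Δ(i*) - E[Δ(i')] ≤ (r/(r+1))^r · Δ(i*)`. -/
theorem partimax_per_iteration {ι σ : Type*} [Fintype ι] [DecidableEq ι] [DecidableEq σ]
    (Bp : Finset σ) (covers : ι → σ → Prop) [∀ i, DecidablePred (covers i)]
    (A : Finset ι) (t : ℕ) (ht0 : 0 < t)
    (ht : ∀ s ∈ Bp, (Finset.univ.filter fun i : ι => covers i s).card = t)
    (m : ℕ) (hm : m = (Bp.filter fun s => ∀ j ∈ A, ¬ covers j s).card) (hm0 : 0 < m)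
    (Δ : ι → ℕ)
    (hΔ : ∀ i : ι, Δ i = (Bp.filter fun s => covers i s ∧ ∀ j ∈ A, ¬ covers j s).card)
    (r : ℕ) (hr1 : 1 ≤ r) (hr : ((t : ℝ) * m) / 2 - 1 ≤ (r : ℝ))
    (istar : ι) (histar : istar ∉ A) (hmax : ∀ i ∉ A, Δ i ≤ Δ istar) :
    (Δ istar : ℝ) -
      ∑ ω : Fin r → ι, (∏ l, (Δ (ω l) : ℝ) / ((t : ℝ) * m)) *
        (Finset.univ.sup' ⟨⟨0, hr1⟩, Finset.mem_univ _⟩ fun l => (Δ (ω l) : ℝ))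
      ≤ ((r : ℝ) / (r + 1)) ^ r * (Δ istar : ℝ) := by
  classical
  set c : ℝ := (t : ℝ) * m with hc
  have hc0 : 0 < c := by
    have : (0:ℝ) < (t:ℝ) := by exact_mod_cast ht0
    have h2 : (0:ℝ) < (m:ℝ) := by exact_mod_cast hm0
    exact mul_pos this h2
  -- Δ vanishes on A
  have hΔA : ∀ i ∈ A, Δ i = 0 := by
    intro i hi
    rw [hΔ, Finset.card_eq_zero, Finset.filter_eq_empty_iff]
    rintro s hs ⟨h1, h2⟩
    exact h2 i hi h1
  have hle : ∀ i, Δ i ≤ Δ istar := by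
    intro i
    by_cases hi : i ∈ A
    · rw [hΔA i hi]; exact Nat.zero_le _
    · exact hmax i hi
  -- double counting: ∑ Δ = t * m
  have hsumΔ : ∑ i : ι, Δ i = t * m := by
    have key : ∀ i : ι, Δ i =
        ∑ s ∈ Bp.filter (fun s => ∀ j ∈ A, ¬ covers j s), if covers i s then 1 else 0 := by
      intro i
      rw [hΔ, ← Finset.card_filter, Finset.filter_filter]
      congr 1
      apply Finset.filter_congr
      intro s _
      tauto
    calc ∑ i : ι, Δ i
        = ∑ i : ι, ∑ s ∈ Bp.filter (fun s => ∀ j ∈ A, ¬ covers j s),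
            if covers i s then 1 else 0 := by
          exact Finset.sum_congr rfl fun i _ => key i
      _ = ∑ s ∈ Bp.filter (fun s => ∀ j ∈ A, ¬ covers j s),
            ∑ i : ι, if covers i s then 1 else 0 := Finset.sum_comm
      _ = ∑ s ∈ Bp.filter (fun s => ∀ j ∈ A, ¬ covers j s), t := by
          apply Finset.sum_congr rfl
          intro s hs
          rw [← Finset.card_filter]
          exact ht s (Finset.mem_of_mem_filter s hs)
      _ = t * m := by rw [Finset.sum_const, hm]; ring
  have hsumΔR : ∑ i : ι, (Δ i : ℝ) = c := by
    rw [hc]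
    exact_mod_cast congrArg (Nat.cast : ℕ → ℝ) hsumΔ
  -- probability weights
  set p : ι → ℝ := fun i => (Δ i : ℝ) / c with hp
  have hp0 : ∀ i, 0 ≤ p i := fun i => div_nonneg (Nat.cast_nonneg _) hc0.le
  have hpsum : ∑ i : ι, p i = 1 := by
    rw [hp, ← Finset.sum_div, hsumΔR, div_self hc0.ne']
  -- the sup'
  set l0 : Fin r := ⟨0, hr1⟩ with hl0
  set M : (Fin r → ι) → ℝ :=
    fun ω => Finset.univ.sup' ⟨l0, Finset.mem_univ _⟩ fun l => (Δ (ω l) : ℝ) with hM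
  have hMle : ∀ ω, M ω ≤ (Δ istar : ℝ) := by
    intro ω
    apply Finset.sup'_le
    intro l _
    exact_mod_cast hle (ω l)
  have hMge : ∀ ω l, (Δ (ω l) : ℝ) ≤ M ω := by
    intro ω l
    exact Finset.le_sup' (fun l => (Δ (ω l) : ℝ)) (Finset.mem_univ l)
  -- bad-set function
  set g : ι → ℝ := fun i => if Δ i < Δ istar then p i else 0 with hg
  have hg0 : ∀ i, 0 ≤ g i := by
    intro i
    rw [hg]
    dsimp only
    split
    · exact hp0 i
    · exact le_refl 0
  -- sum of products of p over all ω is 1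
  have hPsum : ∑ ω : Fin r → ι, ∏ l, p (ω l) = 1 := by
    rw [← Fintype.piFinset_univ, ← Finset.prod_univ_sum]
    simp [hpsum]
  -- main pointwise bound
  have hpoint : ∀ ω : Fin r → ι,
      (∏ l, p (ω l)) * ((Δ istar : ℝ) - M ω) ≤ (Δ istar : ℝ) * ∏ l, g (ω l) := by
    intro ω
    by_cases hbad : ∀ l, Δ (ω l) < Δ istar
    · have : ∏ l, g (ω l) = ∏ l, p (ω l) := by
        apply Finset.prod_congr rfl
        intro l _
        rw [hg]
        simp [hbad l]
      rw [this, mul_comm ((Δ istar : ℝ)) _]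
      apply mul_le_mul_of_nonneg_left
      · have := hMge ω l0
        have h0 : (0:ℝ) ≤ M ω := le_trans (Nat.cast_nonneg _) this
        linarith
      · exact Finset.prod_nonneg fun l _ => hp0 (ω l)
    · push_neg at hbad
      obtain ⟨l, hl⟩ := hbad
      have heq : Δ (ω l) = Δ istar := le_antisymm (hle (ω l)) hl
      have hMeq : M ω = (Δ istar : ℝ) := le_antisymm (hMle ω) (by
        have := hMge ω l
        rwa [heq] at this)
      rw [hMeq, sub_self, mul_zero]
      exact mul_nonneg (Nat.cast_nonneg _) (Finset.prod_nonneg fun l _ => hg0 (ω l))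
  -- q = sum of g, and its bound
  set q : ℝ := ∑ i : ι, g i with hq
  have hq0 : 0 ≤ q := Finset.sum_nonneg fun i _ => hg0 i
  have hqsum : ∑ ω : Fin r → ι, ∏ l, g (ω l) = q ^ r := by
    rw [← Fintype.piFinset_univ, ← Finset.prod_univ_sum]
    simp [hq]
  have hr1' : (0:ℝ) < (r:ℝ) + 1 := by positivity
  have hqle : q ≤ (r : ℝ) / ((r : ℝ) + 1) := by
    by_cases hΔ2 : 2 ≤ Δ istar
    · -- q ≤ 1 - Δ*/c ≤ r/(r+1)
      have hsub : q ≤ (∑ i : ι, p i) - p istar := by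
        have : q = ∑ i ∈ Finset.univ.filter (fun i => Δ i < Δ istar), p i := by
          rw [hq, hg]
          exact (Finset.sum_filter _ _).symm
        rw [this]
        have hsplit : ∑ i ∈ Finset.univ.filter (fun i => Δ i < Δ istar), p i
            ≤ ∑ i ∈ Finset.univ.erase istar, p i := by
          apply Finset.sum_le_sum_of_subset_of_nonneg
          · intro i hi
            rw [Finset.mem_filter] at hi
            rw [Finset.mem_erase]
            exact ⟨fun h => absurd (h ▸ hi.2) (lt_irrefl _), Finset.mem_univ i⟩
          · intro i _ _; exact hp0 i
        rwa [Finset.sum_erase_eq_sub (Finset.mem_univ istar)] at hsplit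
      rw [hpsum] at hsub
      have hps : (1:ℝ)/((r:ℝ)+1) ≤ p istar := by
        rw [hp]
        dsimp only
        rw [div_le_div_iff₀ hr1' hc0]
        have hΔ2R : (2:ℝ) ≤ (Δ istar : ℝ) := by exact_mod_cast hΔ2
        have hcle : c ≤ 2 * ((r:ℝ) + 1) := by linarith [hr]
        nlinarith
      have : q ≤ 1 - 1/((r:ℝ)+1) := by linarith
      calc q ≤ 1 - 1/((r:ℝ)+1) := this
        _ = (r:ℝ)/((r:ℝ)+1) := by field_simp; ring
    · -- Δ* ≤ 1 : every g i = 0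
      push_neg at hΔ2
      have : q = 0 := by
        rw [hq]
        apply Finset.sum_eq_zero
        intro i _
        rw [hg]
        dsimp only
        split
        · rename_i h
          have : Δ i = 0 := by omega
          rw [hp]; simp [this]
        · rfl
      rw [this]
      positivity
  -- assemble
  have hLHS : (Δ istar : ℝ) - ∑ ω : Fin r → ι, (∏ l, p (ω l)) * M ω
      = ∑ ω : Fin r → ι, (∏ l, p (ω l)) * ((Δ istar : ℝ) - M ω) := by
    simp only [mul_sub]
    rw [Finset.sum_sub_distrib, ← Finset.sum_mul, hPsum, one_mul]
  show (Δ istar : ℝ) - ∑ ω : Fin r → ι, (∏ l, p (ω l)) * M ω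
      ≤ ((r : ℝ) / (↑r + 1)) ^ r * (Δ istar : ℝ)
  rw [hLHS]
  calc ∑ ω : Fin r → ι, (∏ l, p (ω l)) * ((Δ istar : ℝ) - M ω)
      ≤ ∑ ω : Fin r → ι, (Δ istar : ℝ) * ∏ l, g (ω l) :=
        Finset.sum_le_sum fun ω _ => hpoint ω
    _ = (Δ istar : ℝ) * q ^ r := by rw [← Finset.mul_sum, hqsum]
    _ ≤ (Δ istar : ℝ) * ((r : ℝ) / ((r : ℝ) + 1)) ^ r := by
        apply mul_le_mul_of_nonneg_left _ (Nat.cast_nonneg _)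
        exact pow_le_pow_left₀ hq0 hqle r
    _ = ((r : ℝ) / ((r : ℝ) + 1)) ^ r * (Δ istar : ℝ) := mul_comm _ _
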